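/- Dichotomy lemma (key step in the proof of Theorem 2). Assume p_x > 0 for every x ∈ {0,…,X}. Let D* be a solution of the constrained minimization problem. Then for all m ∈ {0,…,X} and n ∈ {0,…,B}, at least one of the following two equalities holds: Σ_{i=0}^{m} p_i D*_{i,n} = a_n, or Σ_{i=n}^{B} D*_{m,i} = 1. -/

import Mathlib

open Finset

/-- A matrix `D ∈ ℝ^{(X+1)×(B+1)}` is feasible for the vector `a ∈ ℝ^{B+1}`
(with respect to the request distribution `p` and buffer level `b`) if
(i) `∑_x p x * D x n = a n` for every `n`,
(ii) each row of `D` sums to `1`,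
(iii) all entries of `D` are nonnegative, and
(iv) `D x n = 0` whenever `x + n < b`. -/
def Feasible (X B b : ℕ) (p : Fin (X+1) → ℝ) (a : Fin (B+1) → ℝ)
    (D : Fin (X+1) → Fin (B+1) → ℝ) : Prop :=
  (∀ n : Fin (B+1), ∑ x : Fin (X+1), p x * D x n = a n) ∧
  (∀ x : Fin (X+1), ∑ n : Fin (B+1), D x n = 1) ∧
  (∀ (x : Fin (X+1)) (n : Fin (B+1)), 0 ≤ D x n) ∧
  (∀ (x : Fin (X+1)) (n : Fin (B+1)), (x : ℕ) + (n : ℕ) < b → D x n = 0)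

/-- The expected-energy objective
`ω(D) = η^{-b} · ∑_x ∑_n η^x p_x D_{x,n} η^n − 1`. -/
noncomputable def objective (X B b : ℕ) (η : ℝ) (p : Fin (X+1) → ℝ)
    (D : Fin (X+1) → Fin (B+1) → ℝ) : ℝ :=
  η ^ (-(b : ℤ)) *
    (∑ x : Fin (X+1), ∑ n : Fin (B+1), η ^ (x : ℕ) * p x * D x n * η ^ (n : ℕ)) - 1

/-- `D` is a solution of the constrained minimization problem: it is feasible
for `a` and minimizes the objective among all feasible matrices. -/
def IsSolution (X B b : ℕ) (η : ℝ) (p : Fin (X+1) → ℝ) (a : Fin (B+1) → ℝ)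
    (D : Fin (X+1) → Fin (B+1) → ℝ) : Prop :=
  Feasible X B b p a D ∧
    ∀ D' : Fin (X+1) → Fin (B+1) → ℝ, Feasible X B b p a D' →
      objective X B b η p D ≤ objective X B b η p D'

/-- **Dichotomy lemma.** Assume all request probabilities are positive. If `D`
solves the constrained minimization problem, then for all `m, n` either the
partial column sum `∑_{i=0}^m p_i D_{i,n}` saturates `a_n`, or the tail row
sum `∑_{i=n}^B D_{m,i}` saturates `1`. -/
theorem dichotomy
    (X B b : ℕ) (hb : b ≤ B) (η : ℝ) (hη : 1 < η)
    (p : Fin (X+1) → ℝ) (hp : ∀ x, 0 < p x) (hp1 : ∑ x : Fin (X+1), p x = 1)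
    (a : Fin (B+1) → ℝ) (ha : ∀ n, 0 ≤ a n) (ha1 : ∑ n : Fin (B+1), a n = 1)
    (D : Fin (X+1) → Fin (B+1) → ℝ)
    (hD : IsSolution X B b η p a D)
    (m : Fin (X+1)) (n : Fin (B+1)) :
    (∑ i ∈ Finset.Iic m, p i * D i n = a n) ∨
    (∑ i ∈ Finset.Ici n, D m i = 1) := by
  by_contra hcon
  push_neg at hcon
  obtain ⟨h1, h2⟩ := hcon
  obtain ⟨⟨hcol, hrow, hnn, hzero⟩, hmin⟩ := hD
  -- find x > m with D x n > 0
  have htot1 : ∑ i ∈ Finset.Iic m, p i * D i n + ∑ i ∈ (Finset.Iic m)ᶜ, p i * D i n = a n := by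
    rw [Finset.sum_add_sum_compl]; exact hcol n
  obtain ⟨x, hxmem, hxpos⟩ : ∃ x ∈ (Finset.Iic m)ᶜ, 0 < p x * D x n := by
    by_contra h
    push_neg at h
    have hle : ∑ i ∈ (Finset.Iic m)ᶜ, p i * D i n ≤ 0 := Finset.sum_nonpos h
    have hge : (0:ℝ) ≤ ∑ i ∈ (Finset.Iic m)ᶜ, p i * D i n :=
      Finset.sum_nonneg fun i _ => mul_nonneg (hp i).le (hnn i n)
    exact h1 (by linarith)
  have hmx : m < x := by simpa using hxmem
  have hDxn : 0 < D x n := by have := hp x; nlinarith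
  -- find j < n with D m j > 0
  have htot2 : ∑ i ∈ Finset.Ici n, D m i + ∑ i ∈ (Finset.Ici n)ᶜ, D m i = 1 := by
    rw [Finset.sum_add_sum_compl]; exact hrow m
  obtain ⟨j, hjmem, hDmj⟩ : ∃ j ∈ (Finset.Ici n)ᶜ, 0 < D m j := by
    by_contra h
    push_neg at h
    have hle : ∑ i ∈ (Finset.Ici n)ᶜ, D m i ≤ 0 := Finset.sum_nonpos h
    have hge : (0:ℝ) ≤ ∑ i ∈ (Finset.Ici n)ᶜ, D m i :=
      Finset.sum_nonneg fun i _ => hnn m i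
    exact h2 (by linarith)
  have hjn : j < n := by simpa using hjmem
  have hmxne : x ≠ m := ne_of_gt hmx
  have hjnne : j ≠ n := ne_of_lt hjn
  have hpx := hp x
  have hpm := hp m
  -- the perturbation
  set ε : ℝ := min (D m j) (D x n * p x / p m) with hεdef
  have hεpos : 0 < ε := lt_min hDmj (by positivity)
  set rf : Fin (X+1) → ℝ := fun i => (if i = m then 1 else 0) - (if i = x then p m / p x else 0) with hrfdef
  set cf : Fin (B+1) → ℝ := fun k => (if k = n then 1 else 0) - (if k = j then 1 else 0) with hcfdef
  set D' : Fin (X+1) → Fin (B+1) → ℝ := fun i k => D i k + ε * (rf i * cf k) with hD'def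
  have hrf0 : ∀ i, i ≠ m → i ≠ x → rf i = 0 := by
    intro i ha hb; simp [hrfdef, ha, hb]
  have hcf0 : ∀ k, k ≠ n → k ≠ j → cf k = 0 := by
    intro k ha hb; simp [hcfdef, ha, hb]
  have hrfm : rf m = 1 := by simp [hrfdef, hmxne.symm]
  have hrfx : rf x = -(p m / p x) := by simp [hrfdef, hmxne]
  have hcfn : cf n = 1 := by simp [hcfdef, hjnne.symm]
  have hcfj : cf j = -1 := by simp [hcfdef, hjnne]
  -- sums of the factors
  have hrfsum : ∑ i : Fin (X+1), p i * rf i = 0 := by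
    have hterm : ∀ i : Fin (X+1), p i * rf i =
        (if i = m then p m else 0) - (if i = x then p x * (p m / p x) else 0) := by
      intro i
      by_cases hA : i = m
      · rw [hA, hrfm]; simp [hmxne.symm]
      · by_cases hB : i = x
        · rw [hB, hrfx]; simp [hA, hB, hmxne]
        · rw [hrf0 i hA hB]; simp [hA, hB]
    rw [Finset.sum_congr rfl fun i _ => hterm i, Finset.sum_sub_distrib,
      Finset.sum_ite_eq' Finset.univ m, Finset.sum_ite_eq' Finset.univ x]
    simp only [Finset.mem_univ, if_true]
    field_simp
    ring
  have hrfηsum : ∑ i : Fin (X+1), η ^ (i:ℕ) * p i * rf i = p m * (η ^ (m:ℕ) - η ^ (x:ℕ)) := by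
    have hterm : ∀ i : Fin (X+1), η ^ (i:ℕ) * p i * rf i =
        (if i = m then η ^ (m:ℕ) * p m else 0) -
        (if i = x then η ^ (x:ℕ) * (p x * (p m / p x)) else 0) := by
      intro i
      by_cases hA : i = m
      · rw [hA, hrfm]; simp [hmxne.symm]
      · by_cases hB : i = x
        · rw [hB, hrfx]; simp [hA, hB, hmxne]; ring
        · rw [hrf0 i hA hB]; simp [hA, hB]
    rw [Finset.sum_congr rfl fun i _ => hterm i, Finset.sum_sub_distrib,
      Finset.sum_ite_eq' Finset.univ m, Finset.sum_ite_eq' Finset.univ x]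
    simp only [Finset.mem_univ, if_true]
    field_simp
  have hcfsum : ∑ k : Fin (B+1), cf k = 0 := by
    simp [hcfdef, Finset.sum_sub_distrib]
  have hcfηsum : ∑ k : Fin (B+1), cf k * η ^ (k:ℕ) = η ^ (n:ℕ) - η ^ (j:ℕ) := by
    have hterm : ∀ k : Fin (B+1), cf k * η ^ (k:ℕ) =
        (if k = n then η ^ (n:ℕ) else 0) - (if k = j then η ^ (j:ℕ) else 0) := by
      intro k
      by_cases hA : k = n
      · rw [hA, hcfn]; simp [hjnne.symm]
      · by_cases hB : k = j
        · rw [hB, hcfj]; simp [hA, hB, hjnne]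
        · rw [hcf0 k hA hB]; simp [hA, hB]
    rw [Finset.sum_congr rfl fun k _ => hterm k, Finset.sum_sub_distrib,
      Finset.sum_ite_eq' Finset.univ n, Finset.sum_ite_eq' Finset.univ j]
    simp only [Finset.mem_univ, if_true]
  -- cells touched by the perturbation have index sum ≥ b
  have hmjb : b ≤ (m:ℕ) + (j:ℕ) := by
    by_contra h
    exact absurd (hzero m j (by omega)) (ne_of_gt hDmj)
  have hxnb : b ≤ (x:ℕ) + (n:ℕ) := by
    by_contra h
    exact absurd (hzero x n (by omega)) (ne_of_gt hDxn)
  have hmxN : (m:ℕ) < (x:ℕ) := hmx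
  have hjnN : (j:ℕ) < (n:ℕ) := hjn
  -- feasibility of D'
  have hfeas : Feasible X B b p a D' := by
    refine ⟨?_, ?_, ?_, ?_⟩
    · intro k
      have hterm : ∀ i : Fin (X+1), p i * D' i k = p i * D i k + ε * cf k * (p i * rf i) := by
        intro i; simp only [hD'def]; ring
      rw [Finset.sum_congr rfl fun i _ => hterm i, Finset.sum_add_distrib, ← Finset.mul_sum,
        hrfsum, hcol k]
      ring
    · intro i
      have hterm : ∀ k : Fin (B+1), D' i k = D i k + ε * rf i * cf k := by
        intro k; simp only [hD'def]; ring
      rw [Finset.sum_congr rfl fun k _ => hterm k, Finset.sum_add_distrib, ← Finset.mul_sum,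
        hcfsum, hrow i]
      ring
    · intro i k
      simp only [hD'def]
      have hDik := hnn i k
      by_cases hA : i = m
      · by_cases hB : k = n
        · rw [hA, hB, hrfm, hcfn]
          have := hnn m n; linarith
        · by_cases hC : k = j
          · rw [hA, hC, hrfm, hcfj]
            have hle1 : ε ≤ D m j := min_le_left _ _
            linarith
          · rw [hcf0 k hB hC]; linarith
      · by_cases hB : i = x
        · by_cases hC : k = n
          · rw [hB, hC, hrfx, hcfn]
            have hle2 : ε ≤ D x n * p x / p m := min_le_right _ _
            rw [le_div_iff₀ hpm] at hle2
            have key : ε * (p m / p x) ≤ D x n := by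
              rw [show ε * (p m / p x) = ε * p m / p x by ring, div_le_iff₀ hpx]
              nlinarith
            linarith
          · by_cases hE : k = j
            · rw [hB, hE, hrfx, hcfj]
              have hpos : 0 < p m / p x := by positivity
              nlinarith [mul_pos hεpos hpos, hnn x j]
            · rw [hcf0 k hC hE]; linarith
        · rw [hrf0 i hA hB]; linarith
    · intro i k hik
      simp only [hD'def]
      have hD0 : D i k = 0 := hzero i k hik
      have hpert : rf i * cf k = 0 := by
        by_cases hA : i = m
        · by_cases hB : k = n
          · rw [hA, hB] at hik; omega
          · by_cases hC : k = j
            · rw [hA, hC] at hik; omega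
            · rw [hcf0 k hB hC]; ring
        · by_cases hB : i = x
          · by_cases hC : k = n
            · rw [hB, hC] at hik; omega
            · by_cases hE : k = j
              · rw [hB, hE] at hik; omega
              · rw [hcf0 k hC hE]; ring
          · rw [hrf0 i hA hB]; ring
      rw [hD0, hpert]; ring
  -- objective strictly decreases
  have hobj : objective X B b η p D' =
      objective X B b η p D +
        η ^ (-(b:ℤ)) * (ε * (p m * (η ^ (m:ℕ) - η ^ (x:ℕ)) * (η ^ (n:ℕ) - η ^ (j:ℕ)))) := by
    simp only [objective]
    have hterm : ∀ (i : Fin (X+1)) (k : Fin (B+1)),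
        η ^ (i:ℕ) * p i * D' i k * η ^ (k:ℕ) =
        η ^ (i:ℕ) * p i * D i k * η ^ (k:ℕ) +
          ε * ((η ^ (i:ℕ) * p i * rf i) * (cf k * η ^ (k:ℕ))) := by
      intro i k; simp only [hD'def]; ring
    have hsum : ∑ i : Fin (X+1), ∑ k : Fin (B+1),
        η ^ (i:ℕ) * p i * D' i k * η ^ (k:ℕ) =
        (∑ i : Fin (X+1), ∑ k : Fin (B+1), η ^ (i:ℕ) * p i * D i k * η ^ (k:ℕ)) +
        ε * ((∑ i : Fin (X+1), η ^ (i:ℕ) * p i * rf i) * (∑ k : Fin (B+1), cf k * η ^ (k:ℕ))) := by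
      rw [Finset.sum_mul_sum, Finset.mul_sum, ← Finset.sum_add_distrib]
      refine Finset.sum_congr rfl fun i _ => ?_
      rw [Finset.mul_sum, ← Finset.sum_add_distrib]
      exact Finset.sum_congr rfl fun k _ => hterm i k
    rw [hsum, hrfηsum, hcfηsum]
    ring
  have hlt : objective X B b η p D' < objective X B b η p D := by
    rw [hobj]
    have hpow : (0:ℝ) < η ^ (-(b:ℤ)) := by positivity
    have hpmx : η ^ (m:ℕ) < η ^ (x:ℕ) := pow_lt_pow_right₀ hη hmxN
    have hpjn : η ^ (j:ℕ) < η ^ (n:ℕ) := pow_lt_pow_right₀ hη hjnN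
    have t1 : p m * (η ^ (m:ℕ) - η ^ (x:ℕ)) < 0 := mul_neg_of_pos_of_neg hpm (by linarith)
    have t2 : p m * (η ^ (m:ℕ) - η ^ (x:ℕ)) * (η ^ (n:ℕ) - η ^ (j:ℕ)) < 0 :=
      mul_neg_of_neg_of_pos t1 (by linarith)
    have hneg : ε * (p m * (η ^ (m:ℕ) - η ^ (x:ℕ)) * (η ^ (n:ℕ) - η ^ (j:ℕ))) < 0 :=
      mul_neg_of_pos_of_neg hεpos t2
    have := mul_neg_of_pos_of_neg hpow hneg
    linarith
  exact absurd (hmin D' hfeas) (not_le.mpr hlt)
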